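/- The explicit discrete-time update (R̂_{i+1} = R̂ᵢ exp(h Ω̂_{i+1}^×) variant with ω_{i+1} = (mI + hD)^{-1}[exp(−hΩ̂ᵢ^×) m ωᵢ + h Φ'(𝒰⁰ᵢ) S_{Lᵢ}(R̂ᵢ)]) is the adjoint integrator of the implicit scheme m ω_{i+1} = exp(−hΩ̂_{i+1}^×)[(mI − hD)ωᵢ + h Φ'(𝒰⁰_{i+1}) S_{L_{i+1}}(R̂_{i+1})], R̂_{i+1} = R̂ᵢ exp(hΩ̂ᵢ^×): that is, the explicit map is obtained from the implicit map Ξ_h by Ξ*_h = Ξ_{−h}^{-1} (swap indices i ↔ i+1 and replace h by −h). -/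

import Mathlib

open Matrix

/-- The hat map `(·)^× : ℝ³ → 𝔰𝔬(3)`. -/
def hat (v : Fin 3 → ℝ) : Matrix (Fin 3) (Fin 3) ℝ :=
  !![0, -v 2, v 1; v 2, 0, -v 0; -v 1, v 0, 0]

/-- the explicit discrete-time update
`R̂₁ = R̂₀ exp(h (Ωᵐ₁ − ω₁)^×)`,
`ω₁ = (mI + hD)⁻¹ [exp(−h (Ωᵐ₀ − ω₀)^×) (m ω₀) + h S₀(R̂₀)]`
is the adjoint `Ξ*_h = Ξ_{−h}⁻¹` of the implicit scheme
`R̂_{i+1} = R̂ᵢ exp(h Ω̂ᵢ^×)`,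
`m ω_{i+1} = exp(−h Ω̂_{i+1}^×)[(mI − hD) ωᵢ + h S_{i+1}(R̂_{i+1})]`:
i.e., for fixed external data (`Ωᵐ` at the two steps, and the gradient terms
`S₀, S₁` — with `Sᵢ = Φ'(𝒰⁰ᵢ) S_{Lᵢ}`), the pair `((R̂₀,ω₀), (R̂₁,ω₁))` satisfies the
explicit update iff it satisfies the implicit update with indices `0 ↔ 1` swapped and
`h` replaced by `−h`. -/
theorem explicit_is_adjoint_of_implicit
    (h m : ℝ) (hm : 0 < m) (D : Matrix (Fin 3) (Fin 3) ℝ) (hD : D.PosDef)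
    (S₀ S₁ : Matrix (Fin 3) (Fin 3) ℝ → Fin 3 → ℝ)
    (Ωm₀ Ωm₁ : Fin 3 → ℝ) (R₀ R₁ : Matrix (Fin 3) (Fin 3) ℝ) (ω₀ ω₁ : Fin 3 → ℝ)
    (hinv : IsUnit (m • (1 : Matrix (Fin 3) (Fin 3) ℝ) + h • D).det) :
    -- explicit (adjoint) update from (R₀,ω₀) to (R₁,ω₁)
    (R₁ = R₀ * NormedSpace.exp (h • hat (Ωm₁ - ω₁)) ∧
     ω₁ = (m • (1 : Matrix (Fin 3) (Fin 3) ℝ) + h • D)⁻¹ *ᵥ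
       (NormedSpace.exp (-(h • hat (Ωm₀ - ω₀))) *ᵥ (m • ω₀) + h • S₀ R₀))
    ↔
    -- implicit scheme `Ξ_{−h}` mapping (R₁,ω₁) back to (R₀,ω₀) (indices swapped, h ↦ −h)
    (R₀ = R₁ * NormedSpace.exp ((-h) • hat (Ωm₁ - ω₁)) ∧
     m • ω₀ = NormedSpace.exp (-((-h) • hat (Ωm₀ - ω₀))) *ᵥ
       ((m • (1 : Matrix (Fin 3) (Fin 3) ℝ) - (-h) • D) *ᵥ ω₁ + (-h) • S₀ R₀)) := by
  set M : Matrix (Fin 3) (Fin 3) ℝ := m • (1 : Matrix (Fin 3) (Fin 3) ℝ) + h • D with hM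
  set A : Matrix (Fin 3) (Fin 3) ℝ := h • hat (Ωm₁ - ω₁) with hA
  set B : Matrix (Fin 3) (Fin 3) ℝ := h • hat (Ωm₀ - ω₀) with hB
  have hEA : NormedSpace.exp (-A) * NormedSpace.exp A = 1 := by
    rw [← Matrix.exp_add_of_commute (-A) A ((Commute.refl A).neg_left), neg_add_cancel,
      NormedSpace.exp_zero]
  have hEA' : NormedSpace.exp A * NormedSpace.exp (-A) = 1 := by
    rw [← Matrix.exp_add_of_commute A (-A) ((Commute.refl A).neg_right), add_neg_cancel,
      NormedSpace.exp_zero]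
  have hEB : NormedSpace.exp B * NormedSpace.exp (-B) = 1 := by
    rw [← Matrix.exp_add_of_commute B (-B) ((Commute.refl B).neg_right), add_neg_cancel,
      NormedSpace.exp_zero]
  have hEB' : NormedSpace.exp (-B) * NormedSpace.exp B = 1 := by
    rw [← Matrix.exp_add_of_commute (-B) B ((Commute.refl B).neg_left), neg_add_cancel,
      NormedSpace.exp_zero]
  have hneg : (-h) • hat (Ωm₁ - ω₁) = -A := by rw [hA, neg_smul]
  have hnegB : -((-h) • hat (Ωm₀ - ω₀)) = B := by rw [hB, neg_smul, neg_neg]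
  have hMD : m • (1 : Matrix (Fin 3) (Fin 3) ℝ) - (-h) • D = M := by
    rw [hM, neg_smul, sub_neg_eq_add]
  rw [hneg, hnegB, hMD]
  constructor
  · rintro ⟨hR, hω⟩
    constructor
    · rw [hR, mul_assoc, hEA', mul_one]
    · have h1 : M *ᵥ ω₁ = NormedSpace.exp (-B) *ᵥ (m • ω₀) + h • S₀ R₀ := by
        rw [hω, mulVec_mulVec, Matrix.mul_nonsing_inv _ hinv, one_mulVec]
      have : M *ᵥ ω₁ + (-h) • S₀ R₀ = NormedSpace.exp (-B) *ᵥ (m • ω₀) := by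
        rw [h1, neg_smul, add_assoc, add_neg_cancel, add_zero]
      rw [this, mulVec_mulVec, hEB, one_mulVec]
  · rintro ⟨hR, hω⟩
    constructor
    · rw [hR, mul_assoc, hEA, mul_one]
    · have h1 : NormedSpace.exp (-B) *ᵥ (m • ω₀) = M *ᵥ ω₁ + (-h) • S₀ R₀ := by
        rw [hω, mulVec_mulVec, hEB', one_mulVec]
      have h2 : M *ᵥ ω₁ = NormedSpace.exp (-B) *ᵥ (m • ω₀) + h • S₀ R₀ := by
        rw [h1, neg_smul, add_assoc, neg_add_cancel, add_zero]
      calc ω₁ = M⁻¹ *ᵥ (M *ᵥ ω₁) := by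
              rw [mulVec_mulVec, Matrix.nonsing_inv_mul _ hinv, one_mulVec]
        _ = _ := by rw [h2]
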